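/- Let x_1, …, x_n be points in the Euclidean space ℝ^p and let d(u,w) = (1/2)‖x_u − x_w‖² be one-half the squared Euclidean distance between x_u and x_w. Let γ be the semi-cohesion measure induced by d, namely γ(u,w) = (1/n)∑_{u₂=1}^n d(u₂,w) + (1/n)∑_{u₁=1}^n d(u,u₁) − (1/n²)∑_{u₂=1}^n∑_{u₁=1}^n d(u₂,u₁) − d(u,w). Then γ(u,w) = ⟨x_u − c, x_w − c⟩ for all u,w, where c = (1/n)∑_{v=1}^n x_v is the centroid of the dataset and ⟨·,·⟩ is the Euclidean inner product. -/
import Mathlib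


open Finset
open scoped RealInnerProductSpace

/-- For points `x_1,…,x_n ∈ ℝ^p` and `d(u,w) = ½‖x_u − x_w‖²`, the induced
semi-cohesion measure satisfies `γ(u,w) = ⟨x_u − c, x_w − c⟩` where `c` is the centroid. -/
theorem gme_cohesion_is_centered_inner {n p : ℕ}
    (x : Fin n → EuclideanSpace ℝ (Fin p))
    (d : Fin n → Fin n → ℝ)
    (hd : ∀ u w, d u w = (1 / 2) * ‖x u - x w‖ ^ 2)
    (γ : Fin n → Fin n → ℝ)
    (hγ : ∀ u w, γ u w =
      (1 / (n : ℝ)) * ∑ u₂ : Fin n, d u₂ w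
      + (1 / (n : ℝ)) * ∑ u₁ : Fin n, d u u₁
      - (1 / (n : ℝ)) ^ 2 * ∑ u₂ : Fin n, ∑ u₁ : Fin n, d u₂ u₁
      - d u w)
    (c : EuclideanSpace ℝ (Fin p))
    (hc : c = (1 / (n : ℝ)) • ∑ v : Fin n, x v) :
    ∀ u w, γ u w = ⟪x u - c, x w - c⟫ := by
  intro u w
  have hn : (n : ℝ) ≠ 0 := by
    have : 0 < n := Fin.pos u
    positivity
  -- express d in terms of inner products
  have hd' : ∀ a b : Fin n, d a b
      = (1/2) * ⟪x a, x a⟫ + (1/2) * ⟪x b, x b⟫ - ⟪x a, x b⟫ := by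
    intro a b
    rw [hd, ← real_inner_self_eq_norm_sq, inner_sub_sub_self,
      real_inner_comm (x b) (x a)]
    ring
  set m : EuclideanSpace ℝ (Fin p) := ∑ v : Fin n, x v with hm
  have hsum1 : ∀ b : Fin n, (∑ a : Fin n, d a b)
      = (1/2) * (∑ a : Fin n, ⟪x a, x a⟫) + (n : ℝ) * ((1/2) * ⟪x b, x b⟫)
        - ⟪m, x b⟫ := by
    intro b
    simp only [hd', sum_sub_distrib, sum_add_distrib, sum_const, card_univ,
      Fintype.card_fin, nsmul_eq_mul, ← mul_sum, hm, sum_inner]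
  have hsum2 : ∀ a : Fin n, (∑ b : Fin n, d a b)
      = (1/2) * (∑ b : Fin n, ⟪x b, x b⟫) + (n : ℝ) * ((1/2) * ⟪x a, x a⟫)
        - ⟪x a, m⟫ := by
    intro a
    simp only [hd', sum_sub_distrib, sum_add_distrib, sum_const, card_univ,
      Fintype.card_fin, nsmul_eq_mul, ← mul_sum, hm, inner_sum]
    ring
  have hsum3 : (∑ a : Fin n, ∑ b : Fin n, d a b)
      = (n : ℝ) * (∑ v : Fin n, ⟪x v, x v⟫) - ⟪m, m⟫ := by
    rw [Finset.sum_congr rfl fun a _ => hsum2 a, sum_sub_distrib, sum_add_distrib,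
      ← sum_inner, ← mul_sum, ← mul_sum, sum_const, card_univ, Fintype.card_fin,
      nsmul_eq_mul, ← hm]
    simp only [← mul_sum]
    ring
  have hcu : ⟪x u - c, x w - c⟫
      = ⟪x u, x w⟫ - (1/(n:ℝ)) * ⟪x u, m⟫ - (1/(n:ℝ)) * ⟪m, x w⟫
        + (1/(n:ℝ))^2 * ⟪m, m⟫ := by
    rw [hc]
    simp only [inner_sub_left, inner_sub_right, real_inner_smul_left,
      real_inner_smul_right, ← hm]
    ring
  rw [hγ, hsum1, hsum2, hsum3, hd', hcu]
  field_simp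
  ring
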